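/- Define d_j(z,s₁,s₂) = s₁s₂(q-q^{-1})²/z + z/(q-q^{-1})² + s₁q^{2j} + s₂q^{-2j}. Let a_j = -s₀s₁(1-q²)/(zq²) - s₀q^{2(1-j)}/(1-q²). Then a_j satisfies: (i) a_j + s₀q^{2(1-j)} = a_{j-1}; and (ii) a_j·d_j(z,s₁,s₂) = a_{j+1}·κ_j where κ_j = a_j·q^{2j}·s₀^{-1}·z + d_{j-1}(z,s₁,s₂); and moreover κ_j = d_j(zq², s₁, q²s₂) for all j ∈ ℤ. -/
import Mathlib

/-- The structure function `d_j(z,s₁,s₂)` of the module `M(z,s)`. -/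
noncomputable def dfun (q z s1 s2 : ℂ) (j : ℤ) : ℂ :=
  s1 * s2 * (q - q⁻¹) ^ 2 / z + z / (q - q⁻¹) ^ 2
    + s1 * q ^ (2 * j) + s2 * q ^ (-(2 * j))

/-- The coefficient `a_j` in the proof of Proposition 2.2(a). -/
noncomputable def afun (q z s0 s1 : ℂ) (j : ℤ) : ℂ :=
  -(s0 * s1 * (1 - q ^ 2)) / (z * q ^ 2)
    - s0 * q ^ (2 * (1 - j)) / (1 - q ^ 2)

/-- The coefficient `κ_j` in the proof of Proposition 2.2(a). -/
noncomputable def kfun (q z s0 s1 s2 : ℂ) (j : ℤ) : ℂ :=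
  afun q z s0 s1 j * q ^ (2 * j) * s0⁻¹ * z + dfun q z s1 s2 (j - 1)

set_option maxHeartbeats 2000000 in
/-- the consistency equations determining the submodule
`M(zq², s⁺) ⊂ M(z,s) ⊗ V_z^{(1)}`, with `s⁺ = (qs₀, s₁, q²s₂)`. -/
theorem submodule_consistency_equations (q z s0 s1 s2 : ℂ)
    (hq : q ≠ 0) (hq2 : q ^ 2 ≠ 1) (hz : z ≠ 0) (hs0 : s0 ≠ 0) :
    (∀ j : ℤ, afun q z s0 s1 j + s0 * q ^ (2 * (1 - j)) = afun q z s0 s1 (j - 1)) ∧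
    (∀ j : ℤ, afun q z s0 s1 j * dfun q z s1 s2 j
        = afun q z s0 s1 (j + 1) * kfun q z s0 s1 s2 j) ∧
    (∀ j : ℤ, kfun q z s0 s1 s2 j = dfun q (z * q ^ 2) s1 (q ^ 2 * s2) j) := by
  have hq1 : (1 : ℂ) - q ^ 2 ≠ 0 := fun h => hq2 (by linear_combination -h)
  have key : ∀ j : ℤ, ∀ t : ℂ, t ≠ 0 → q ^ (2*j) = t →
      (afun q z s0 s1 j + s0 * q ^ (2 * (1 - j)) = afun q z s0 s1 (j - 1)) ∧
      (afun q z s0 s1 j * dfun q z s1 s2 j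
        = afun q z s0 s1 (j + 1) * kfun q z s0 s1 s2 j) ∧
      (kfun q z s0 s1 s2 j = dfun q (z * q ^ 2) s1 (q ^ 2 * s2) j) := by
    intro j t htne ht
    have h1 : q ^ (2*(1-j)) = q^2 * t⁻¹ := by
      rw [show 2*(1-j) = 2 - 2*j by ring, zpow_sub₀ hq, ht, zpow_two, sq, div_eq_mul_inv]
    have h2 : q ^ (-(2*j)) = t⁻¹ := by rw [zpow_neg, ht]
    have h3 : q ^ (2*(j-1)) = t * (q^2)⁻¹ := by
      rw [show 2*(j-1) = 2*j - 2 by ring, zpow_sub₀ hq, ht, zpow_two, sq, div_eq_mul_inv]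
    have h4 : q ^ (2*(j+1)) = t * q ^ 2 := by
      rw [show 2*(j+1) = 2*j + 2 by ring, zpow_add₀ hq, ht, zpow_two, sq]
    have h5 : q ^ (2*(1-(j-1))) = q^2 * q^2 * t⁻¹ := by
      rw [show 2*(1-(j-1)) = 2 + 2 - 2*j by ring, zpow_sub₀ hq, zpow_add₀ hq, ht, zpow_two,
        sq, div_eq_mul_inv]
    have h6 : q ^ (2*(1-(j+1))) = t⁻¹ := by
      rw [show 2*(1-(j+1)) = -(2*j) by ring, zpow_neg, ht]
    have h7 : q ^ (-(2*(j-1))) = q^2 * t⁻¹ := by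
      rw [show -(2*(j-1)) = 2 - 2*j by ring, zpow_sub₀ hq, ht, zpow_two, sq, div_eq_mul_inv]
    simp only [afun, dfun, kfun, h1, h2, h3, h4, h5, h6, h7, ht]
    set w : ℂ := 1 - q ^ 2 with hw
    clear_value w
    have hu : (q - q⁻¹) ^ 2 = w ^ 2 * (q ^ 2)⁻¹ := by
      rw [hw]; field_simp; ring
    simp only [hu]
    simp only [div_eq_mul_inv, mul_inv, inv_inv, ← inv_pow]
    have hqI : q * q⁻¹ = 1 := mul_inv_cancel₀ hq
    have hzI : z * z⁻¹ = 1 := mul_inv_cancel₀ hz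
    have htI : t * t⁻¹ = 1 := mul_inv_cancel₀ htne
    have hwI : w * w⁻¹ = 1 := mul_inv_cancel₀ hq1
    have hsI : s0 * s0⁻¹ = 1 := mul_inv_cancel₀ hs0
    have hC : q^8*z^8*t^8*w^8*s0^8 ≠ 0 := by
      exact mul_ne_zero (mul_ne_zero (mul_ne_zero (mul_ne_zero (pow_ne_zero _ hq)
        (pow_ne_zero _ hz)) (pow_ne_zero _ htne)) (pow_ne_zero _ hq1)) (pow_ne_zero _ hs0)
    refine ⟨mul_left_cancel₀ hC ?_, mul_left_cancel₀ hC ?_, mul_left_cancel₀ hC ?_⟩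
    · linear_combination (norm := ring1)
        ((1:ℂ)*q^10*z^8*t^7*w^7*s0^9) * hw
        + ((1:ℂ)*q^10*z^8*t^7*w^8*s0^9 + (-1:ℂ)*q^10*z^8*t^7*w^8*s0^9*w⁻¹ + (1:ℂ)*q^12*z^8*t^7*w^8*s0^9*w⁻¹) * htI
        + ((-1:ℂ)*q^10*z^8*t^7*w^7*s0^9 + (1:ℂ)*q^12*z^8*t^7*w^7*s0^9) * hwI
    · linear_combination (norm := ring1)
        ((-1:ℂ)*q^4*z^7*t^9*w^9*s0^9*s1^2 + (-1:ℂ)*q^6*z^8*t^8*w^7*s0^9*s1 + (-1:ℂ)*q^8*z^8*t^8*w^7*s0^9*s1 + (-1:ℂ)*q^10*z^9*t^7*w^5*s0^9) * hw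
        + ((1:ℂ)*q^4*z^8*t^9*w^9*s0^9*s1^2*z⁻¹ + (-1:ℂ)*q^4*z^9*t^9*w^10*s0^10*s1^2*z⁻¹^2*s0⁻¹ + (1:ℂ)*q^5*z^8*t^9*w^9*s0^9*s1^2*q⁻¹*z⁻¹ + (-1:ℂ)*q^5*z^9*t^9*w^10*s0^10*s1^2*q⁻¹*z⁻¹^2*s0⁻¹ + (-1:ℂ)*q^6*z^8*t^8*w^9*s0^9*s1*s2*z⁻¹*t⁻¹ + (1:ℂ)*q^6*z^8*t^8*w^10*s0^9*s1*s2*z⁻¹*t⁻¹*w⁻¹ + (1:ℂ)*q^6*z^8*t^9*w^8*s0^9*s1*t⁻¹*w⁻¹ + (-1:ℂ)*q^6*z^8*t^9*w^9*s0^9*s1^2*z⁻¹ + (1:ℂ)*q^6*z^8*t^9*w^9*s0^9*s1^2*q⁻¹^2*z⁻¹ + (-1:ℂ)*q^6*z^9*t^9*w^9*s0^10*s1*z⁻¹*t⁻¹*w⁻¹*s0⁻¹ + (-1:ℂ)*q^6*z^9*t^9*w^10*s0^10*s1^2*q⁻¹^2*z⁻¹^2*s0⁻¹ + (-1:ℂ)*q^7*z^8*t^8*w^9*s0^9*s1*s2*q⁻¹*z⁻¹*t⁻¹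 + (1:ℂ)*q^7*z^8*t^8*w^10*s0^9*s1*s2*q⁻¹*z⁻¹*t⁻¹*w⁻¹ + (1:ℂ)*q^7*z^8*t^9*w^8*s0^9*s1*q⁻¹*t⁻¹*w⁻¹ + (-1:ℂ)*q^7*z^8*t^9*w^9*s0^9*s1^2*q⁻¹*z⁻¹ + (1:ℂ)*q^7*z^8*t^9*w^9*s0^9*s1^2*q⁻¹^3*z⁻¹ + (-1:ℂ)*q^7*z^9*t^9*w^9*s0^10*s1*q⁻¹*z⁻¹*t⁻¹*w⁻¹*s0⁻¹ + (-1:ℂ)*q^7*z^9*t^9*w^10*s0^10*s1^2*q⁻¹^3*z⁻¹^2*s0⁻¹ + (1:ℂ)*q^8*z^8*t^8*w^9*s0^9*s1*s2*z⁻¹*t⁻¹ + (-1:ℂ)*q^8*z^8*t^8*w^10*s0^9*s1*s2*z⁻¹*t⁻¹*w⁻¹ + (-1:ℂ)*q^8*z^9*t^9*w^9*s0^10*s1*z⁻¹*t⁻¹*w⁻¹*s0⁻¹ + (1:ℂ)*q^9*z^8*t^8*w^9*s0^9*s1*s2*q⁻¹*z⁻¹*t⁻¹ + (-1:ℂ)*q^9*z^8*t^8*w^10*s0^9*s1*s2*q⁻¹*z⁻¹*t⁻¹*w⁻¹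 + (-1:ℂ)*q^9*z^9*t^9*w^9*s0^10*s1*q⁻¹*z⁻¹*t⁻¹*w⁻¹*s0⁻¹) * hqI
        + ((1:ℂ)*q^4*z^7*t^9*w^9*s0^9*s1^2 + (-1:ℂ)*q^4*z^7*t^9*w^10*s0^10*s1^2*s0⁻¹ + (-1:ℂ)*q^4*z^8*t^9*w^10*s0^10*s1^2*z⁻¹*s0⁻¹ + (-1:ℂ)*q^6*z^7*t^8*w^9*s0^9*s1*s2*t⁻¹ + (1:ℂ)*q^6*z^7*t^8*w^10*s0^9*s1*s2*t⁻¹*w⁻¹ + (-1:ℂ)*q^6*z^7*t^9*w^9*s0^9*s1^2 + (-1:ℂ)*q^6*z^8*t^9*w^9*s0^10*s1*t⁻¹*w⁻¹*s0⁻¹ + (1:ℂ)*q^8*z^7*t^8*w^9*s0^9*s1*s2*t⁻¹ + (-1:ℂ)*q^8*z^7*t^8*w^10*s0^9*s1*s2*t⁻¹*w⁻¹ + (-1:ℂ)*q^8*z^8*t^9*w^9*s0^10*s1*t⁻¹*w⁻¹*s0⁻¹) * hzI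
        + ((-1:ℂ)*q^6*z^7*t^7*w^9*s0^9*s1*s2 + (1:ℂ)*q^6*z^7*t^7*w^10*s0^9*s1*s2*w⁻¹ + (1:ℂ)*q^6*z^8*t^8*w^8*s0^9*s1*w⁻¹ + (-1:ℂ)*q^6*z^8*t^8*w^9*s0^10*s1*w⁻¹*s0⁻¹ + (1:ℂ)*q^8*z^7*t^7*w^9*s0^9*s1*s2 + (-1:ℂ)*q^8*z^7*t^7*w^10*s0^9*s1*s2*w⁻¹ + (-1:ℂ)*q^8*z^8*t^8*w^9*s0^10*s1*w⁻¹*s0⁻¹ + (-1:ℂ)*q^10*z^8*t^8*w^8*s0^9*s1*w⁻¹ + (1:ℂ)*q^10*z^9*t^7*w^8*s0^9*w⁻¹^3 + (-1:ℂ)*q^10*z^9*t^7*w^8*s0^10*w⁻¹^2*s0⁻¹ + (-1:ℂ)*q^10*z^9*t^8*w^8*s0^10*t⁻¹*w⁻¹^2*s0⁻¹ + (-1:ℂ)*q^12*z^9*t^7*w^8*s0^9*w⁻¹^3) * htI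
        + ((1:ℂ)*q^6*z^7*t^7*w^9*s0^9*s1*s2 + (1:ℂ)*q^6*z^8*t^8*w^7*s0^9*s1 + (-1:ℂ)*q^6*z^8*t^8*w^8*s0^10*s1*s0⁻¹ + (-1:ℂ)*q^8*z^7*t^7*w^9*s0^9*s1*s2 + (-1:ℂ)*q^8*z^8*t^8*w^8*s0^10*s1*s0⁻¹ + (-1:ℂ)*q^10*z^8*t^8*w^7*s0^9*s1 + (1:ℂ)*q^10*z^9*t^7*w^5*s0^9 + (1:ℂ)*q^10*z^9*t^7*w^6*s0^9*w⁻¹ + (-1:ℂ)*q^10*z^9*t^7*w^6*s0^10*s0⁻¹ + (1:ℂ)*q^10*z^9*t^7*w^7*s0^9*w⁻¹^2 + (-1:ℂ)*q^10*z^9*t^7*w^7*s0^10*w⁻¹*s0⁻¹ + (-1:ℂ)*q^12*z^9*t^7*w^5*s0^9 + (-1:ℂ)*q^12*z^9*t^7*w^6*s0^9*w⁻¹ + (-1:ℂ)*q^12*z^9*t^7*w^7*s0^9*w⁻¹^2) * hwI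
        + ((-1:ℂ)*q^4*z^7*t^9*w^10*s0^9*s1^2 + (-1:ℂ)*q^6*z^8*t^8*w^8*s0^9*s1 + (-1:ℂ)*q^8*z^8*t^8*w^8*s0^9*s1 + (-1:ℂ)*q^10*z^9*t^7*w^6*s0^9) * hsI
    · linear_combination (norm := ring1)
        ((-1:ℂ)*q^6*z^8*t^9*w^8*s0^8*s1 + (-1:ℂ)*q^10*z^9*t^8*w^6*s0^8) * hw
        + ((1:ℂ)*q^6*z^8*t^9*w^8*s0^8*s1 + (-1:ℂ)*q^6*z^9*t^9*w^9*s0^9*s1*z⁻¹*s0⁻¹ + (1:ℂ)*q^7*z^8*t^9*w^8*s0^8*s1*q⁻¹ + (-1:ℂ)*q^7*z^9*t^9*w^9*s0^9*s1*q⁻¹*z⁻¹*s0⁻¹ + (-1:ℂ)*q^8*z^8*t^8*w^10*s0^8*s1*s2*q⁻¹^2*z⁻¹ + (-1:ℂ)*q^9*z^8*t^8*w^10*s0^8*s1*s2*q⁻¹^3*z⁻¹) * hqI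
        + ((-1:ℂ)*q^6*z^8*t^9*w^9*s0^9*s1*s0⁻¹) * hzI
        + ((-1:ℂ)*q^10*z^9*t^8*w^8*s0^9*w⁻¹*s0⁻¹) * htI
        + ((1:ℂ)*q^10*z^9*t^8*w^6*s0^8 + (1:ℂ)*q^10*z^9*t^8*w^7*s0^8*w⁻¹ + (-1:ℂ)*q^10*z^9*t^8*w^7*s0^9*s0⁻¹ + (-1:ℂ)*q^12*z^9*t^8*w^6*s0^8 + (-1:ℂ)*q^12*z^9*t^8*w^7*s0^8*w⁻¹) * hwI
        + ((-1:ℂ)*q^6*z^8*t^9*w^9*s0^8*s1 + (-1:ℂ)*q^10*z^9*t^8*w^7*s0^8) * hsI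
  exact ⟨fun j => (key j _ (zpow_ne_zero _ hq) rfl).1,
    fun j => (key j _ (zpow_ne_zero _ hq) rfl).2.1,
    fun j => (key j _ (zpow_ne_zero _ hq) rfl).2.2⟩
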